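/- Fix a real number α < 1. Suppose that for every n ≥ 1 and every n×n unitary matrix A over ℂ there exists a vector v ∈ ℂⁿ with all entries of modulus 1 such that ∑_k |(Av)_k| ≥ n − n^α. Then for every n ≥ 1, every n×n unitary matrix over ℂ has a biunimodular vector. -/

import Mathlib

open Matrix

lemma unitary_sum_sq {n : ℕ} (A : Matrix (Fin n) (Fin n) ℂ)
    (hA : A ∈ Matrix.unitaryGroup (Fin n) ℂ) (v : Fin n → ℂ) :
    ∑ k, ‖A.mulVec v k‖ ^ 2 = ∑ k, ‖v k‖ ^ 2 := by
  have h1 : star (A.mulVec v) ⬝ᵥ (A.mulVec v) = star v ⬝ᵥ v := by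
    rw [Matrix.star_mulVec, dotProduct_mulVec, Matrix.vecMul_vecMul,
      ← Matrix.star_eq_conjTranspose, hA.1, Matrix.vecMul_one]
  have h2 := congrArg Complex.re h1
  simpa [dotProduct, Complex.re_sum, Pi.star_apply, ← Complex.normSq_eq_norm_sq,
    Complex.normSq_eq_conj_mul_self, Complex.normSq_apply] using h2

lemma blockdiag_unitary {n m : ℕ} (A : Matrix (Fin n) (Fin n) ℂ)
    (hA : A ∈ Matrix.unitaryGroup (Fin n) ℂ) :
    (Matrix.blockDiagonal (fun _ : Fin m => A)).submatrix
      finProdFinEquiv.symm finProdFinEquiv.symm ∈ Matrix.unitaryGroup (Fin (n * m)) ℂ := by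
  rw [Matrix.mem_unitaryGroup_iff']
  rw [Matrix.star_eq_conjTranspose, Matrix.conjTranspose_submatrix,
    Matrix.submatrix_mul_equiv, Matrix.blockDiagonal_conjTranspose,
    ← Matrix.blockDiagonal_mul]
  have : (fun _ : Fin m => Aᴴ * A) = fun _ => (1 : Matrix (Fin n) (Fin n) ℂ) := by
    funext j
    rw [← Matrix.star_eq_conjTranspose]
    exact hA.1
  rw [this]
  rw [show (fun _ : Fin m => (1 : Matrix (Fin n) (Fin n) ℂ)) = 1 from rfl, Matrix.blockDiagonal_one, Matrix.submatrix_one_equiv]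

lemma blockdiag_mulVec {n m : ℕ} (A : Matrix (Fin n) (Fin n) ℂ) (w : Fin n × Fin m → ℂ)
    (i : Fin n) (j : Fin m) :
    (Matrix.blockDiagonal (fun _ : Fin m => A)).mulVec w (i, j)
      = A.mulVec (fun i' => w (i', j)) i := by
  simp only [Matrix.mulVec, dotProduct, Matrix.blockDiagonal_apply,
    Fintype.sum_prod_type]
  rw [Finset.sum_comm]
  simp [Finset.sum_ite_eq, ite_mul]

lemma aux_compact {n : ℕ} :
    IsCompact {v : Fin n → ℂ | ∀ k, ‖v k‖ = 1} := by
  have : {v : Fin n → ℂ | ∀ k, ‖v k‖ = 1}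
      = Set.univ.pi (fun _ : Fin n => Metric.sphere (0:ℂ) 1) := by
    ext v
    simp [Set.mem_pi]
  rw [this]
  exact isCompact_univ_pi (fun _ => isCompact_sphere 0 1)

lemma aux_cont {n : ℕ} (A : Matrix (Fin n) (Fin n) ℂ) :
    Continuous fun v : Fin n → ℂ => ∑ k, ‖A.mulVec v k‖ := by
  apply continuous_finset_sum
  intro k _
  apply continuous_norm.comp
  simp only [Matrix.mulVec, dotProduct]
  exact continuous_finset_sum _ fun j _ => continuous_const.mul (continuous_apply j)

lemma aux_m (α : ℝ) (hα : α < 1) (n : ℕ) (hn : 1 ≤ n) (ε : ℝ) (hε : 0 < ε) :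
    ∃ m : ℕ, 1 ≤ m ∧ ((n : ℝ) * m) ^ α / m < ε := by
  have hlim : Filter.Tendsto (fun m : ℕ => (n:ℝ)^α * (m:ℝ)^(α-1)) Filter.atTop (nhds 0) := by
    have h1 : Filter.Tendsto (fun x : ℝ => x ^ (α-1)) Filter.atTop (nhds 0) := by
      simpa using tendsto_rpow_neg_atTop (y := 1 - α) (by linarith)
    have := (h1.comp (tendsto_natCast_atTop_atTop (R := ℝ))).const_mul ((n:ℝ)^α)
    simpa using this
  obtain ⟨m₀, hm₀⟩ := (hlim.eventually (eventually_lt_nhds hε)).exists_forall_of_atTop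
  refine ⟨max m₀ 1, le_max_right _ _, ?_⟩
  have hm1 : (1:ℝ) ≤ (max m₀ 1 : ℕ) := by exact_mod_cast le_max_right m₀ 1
  have hmpos : (0:ℝ) < (max m₀ 1 : ℕ) := by linarith
  have hb := hm₀ (max m₀ 1) (le_max_left _ _)
  have hnn : (0:ℝ) ≤ (n:ℝ) := by positivity
  rw [Real.mul_rpow hnn hmpos.le]
  rw [div_eq_mul_inv, mul_assoc, ← Real.rpow_neg_one ((max m₀ 1 : ℕ):ℝ),
    ← Real.rpow_add hmpos]
  exact hb



/-- A vector `v` is biunimodular for `A` if every entry of `v` and of `A.mulVec v`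
has modulus 1. -/
def IsBiunimodular {n : ℕ} (A : Matrix (Fin n) (Fin n) ℂ) (v : Fin n → ℂ) : Prop :=
  (∀ k, ‖v k‖ = 1) ∧ ∀ k, ‖A.mulVec v k‖ = 1

/-- If, for some fixed `α < 1`, every unitary matrix of every size `n ≥ 1` admits a
unimodular vector `v` with `‖Av‖₁ ≥ n − n^α`, then every unitary matrix has a
biunimodular vector. -/
theorem biunimodular_of_near_extremal (α : ℝ) (hα : α < 1)
    (h : ∀ n : ℕ, 1 ≤ n → ∀ A ∈ Matrix.unitaryGroup (Fin n) ℂ,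
      ∃ v : Fin n → ℂ, (∀ k, ‖v k‖ = 1) ∧
        (n : ℝ) - (n : ℝ) ^ α ≤ ∑ k, ‖A.mulVec v k‖) :
    ∀ n : ℕ, 1 ≤ n → ∀ A ∈ Matrix.unitaryGroup (Fin n) ℂ,
      ∃ v : Fin n → ℂ, IsBiunimodular A v := by
  intro n hn A hA
  set K : Set (Fin n → ℂ) := {v | ∀ k, ‖v k‖ = 1} with hK
  have hKne : K.Nonempty := ⟨fun _ => 1, fun k => by simp⟩
  obtain ⟨v₀, hv₀K, hmax⟩ :=
    aux_compact.exists_isMaxOn hKne (aux_cont A).continuousOn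
  set S := ∑ k, ‖A.mulVec v₀ k‖ with hS
  -- Step 1: n ≤ S
  have hSn : (n : ℝ) ≤ S := by
    by_contra hlt
    push_neg at hlt
    obtain ⟨m, hm1, hmε⟩ := aux_m α hα n hn ((n:ℝ) - S) (by linarith)
    -- block diagonal matrix
    set C : Matrix (Fin (n*m)) (Fin (n*m)) ℂ :=
      (Matrix.blockDiagonal (fun _ : Fin m => A)).submatrix
        finProdFinEquiv.symm finProdFinEquiv.symm with hC
    have hCu : C ∈ Matrix.unitaryGroup (Fin (n*m)) ℂ := blockdiag_unitary A hA
    have hnm : 1 ≤ n * m := Nat.one_le_iff_ne_zero.2 (by positivity)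
    obtain ⟨v, hv1, hv2⟩ := h (n*m) hnm C hCu
    set w : Fin n × Fin m → ℂ := v ∘ finProdFinEquiv with hw
    -- rewrite the sum
    have hsum : ∑ k, ‖C.mulVec v k‖
        = ∑ j : Fin m, ∑ i : Fin n, ‖A.mulVec (fun i' => w (i', j)) i‖ := by
      rw [← Equiv.sum_comp (finProdFinEquiv : Fin n × Fin m ≃ Fin (n*m))
        (fun k => ‖C.mulVec v k‖)]
      rw [Fintype.sum_prod_type_right]
      congr 1; funext j; congr 1; funext i
      congr 1
      rw [← blockdiag_mulVec A w i j]
      simp only [hC, Matrix.mulVec, dotProduct, Matrix.submatrix_apply,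
        Equiv.symm_apply_apply]
      rw [← Equiv.sum_comp (finProdFinEquiv : Fin n × Fin m ≃ Fin (n*m))]
      simp [hw]
    -- each column sum ≤ S
    have hcol : ∀ j : Fin m, ∑ i : Fin n, ‖A.mulVec (fun i' => w (i', j)) i‖ ≤ S := by
      intro j
      exact hmax (fun i => hv1 (finProdFinEquiv (i, j)))
    have hub : ∑ k, ‖C.mulVec v k‖ ≤ m * S := by
      rw [hsum]
      calc ∑ j : Fin m, ∑ i : Fin n, ‖A.mulVec (fun i' => w (i', j)) i‖
          ≤ ∑ _j : Fin m, S := Finset.sum_le_sum fun j _ => hcol j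
        _ = m * S := by simp [mul_comm]
    have hmpos : (0:ℝ) < m := by exact_mod_cast hm1
    have hlb : ((n*m : ℕ):ℝ) - ((n*m : ℕ):ℝ) ^ α ≤ m * S := le_trans hv2 hub
    have hcast : ((n*m : ℕ):ℝ) = (n:ℝ) * m := by push_cast; ring
    rw [hcast] at hlb
    -- n*m - (n*m)^α ≤ m*S  ⇒  n - S ≤ (n*m)^α / m < n - S
    have : (n:ℝ) - S ≤ ((n:ℝ) * m) ^ α / m := by
      rw [le_div_iff₀ hmpos]
      nlinarith
    linarith
  -- Step 2: equality forces biunimodularity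
  refine ⟨v₀, hv₀K, fun k => ?_⟩
  have hsq : ∑ i, ‖A.mulVec v₀ i‖ ^ 2 = n := by
    rw [unitary_sum_sq A hA v₀]
    have : ∀ i, ‖v₀ i‖ ^ 2 = 1 := fun i => by rw [hv₀K i]; norm_num
    simp [this]
  have hzero : ∑ i, (‖A.mulVec v₀ i‖ - 1) ^ 2 ≤ 0 := by
    have expand : ∑ i, (‖A.mulVec v₀ i‖ - 1) ^ 2
        = (∑ i, ‖A.mulVec v₀ i‖ ^ 2) - 2 * S + n := by
      rw [hS, Finset.mul_sum, ← Finset.sum_sub_distrib]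
      rw [show ((n:ℝ)) = ∑ _i : Fin n, (1:ℝ) by simp, ← Finset.sum_add_distrib]
      congr 1; funext i; ring
    rw [expand, hsq]
    linarith
  have heq : ∑ i, (‖A.mulVec v₀ i‖ - 1) ^ 2 = 0 :=
    le_antisymm hzero (Finset.sum_nonneg fun i _ => sq_nonneg _)
  have := (Finset.sum_eq_zero_iff_of_nonneg (fun i _ => sq_nonneg _)).1 heq k (Finset.mem_univ k)
  have := pow_eq_zero_iff (n := 2) (by norm_num) |>.1 this
  linarith [sub_eq_zero.1 this]
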